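/- Let E be a real Banach space, let x₀, g ∈ E, let L ≥ 0, and let v : ℝ → E → E be such that for every t ∈ [0,1] the map v t : E → E is Lipschitz with constant L, and t ↦ v(t, (1−t)·x₀ + t·g) is continuous on [0,1]. Suppose ψ : ℝ → E satisfies ψ 0 = x₀ and has derivative (d/dt) ψ(t) = v(t, ψ(t)) at every t ∈ [0,1]. Then the squared endpoint discrepancy satisfies ‖ψ(1) − g‖² ≤ exp(2L) · ∫_0^1 ‖v(t, (1−t)·x₀ + t·g) − (g − x₀)‖² dt. (Squared Grönwall flow-discrepancy bound: combining the Grönwall estimate with the Cauchy–Schwarz inequality yields the mean-squared-error form used in Proposition 2, with multiplicative constant C = e^{2L}.) -/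

import Mathlib

open Set MeasureTheory intervalIntegral Topology

/-- Grönwall with variable inhomogeneity, `δ`-approximate form. -/
lemma gronwall_var_eps {E : Type*} [NormedAddCommGroup E] [NormedSpace ℝ E]
    {f : ℝ → E} {f' : ℝ → E} {ε : ℝ → ℝ} {L δ : ℝ} (hL : 0 ≤ L) (hδ : 0 < δ)
    (hf : ContinuousOn f (Icc 0 1))
    (hf' : ∀ t ∈ Ico (0:ℝ) 1, HasDerivWithinAt f (f' t) (Ici t) t)
    (hεc : ContinuousOn ε (Icc 0 1))
    (h0 : f 0 = 0)
    (hbound : ∀ t ∈ Ico (0:ℝ) 1, ‖f' t‖ ≤ L * ‖f t‖ + ε t) :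
    ‖f 1‖ ≤ Real.exp L * ∫ s in (0:ℝ)..1, Real.exp (-(L * s)) * (ε s + δ) := by
  set η : ℝ → ℝ := fun s => Real.exp (-(L * s)) * (ε s + δ) with hηdef
  have hηc : ContinuousOn η (Icc 0 1) := by
    apply ContinuousOn.mul
    · exact (Real.continuous_exp.comp (continuous_const.mul continuous_id).neg).continuousOn
    · exact hεc.add continuousOn_const
  have hηint : IntegrableOn η (Icc (0:ℝ) 1) := hηc.integrableOn_compact isCompact_Icc
  set I : ℝ → ℝ := fun t => ∫ s in (0:ℝ)..t, η s with hIdef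
  set B : ℝ → ℝ := fun t => Real.exp (L * t) * I t with hBdef
  set B' : ℝ → ℝ := fun t => L * B t + (ε t + δ) with hB'def
  have hIc : ContinuousOn I (Icc 0 1) := by
    have := continuousOn_primitive_interval (μ := volume) (a := (0:ℝ)) (b := 1)
      (by rwa [Set.uIcc_of_le zero_le_one])
    rwa [Set.uIcc_of_le zero_le_one] at this
  have hBc : ContinuousOn B (Icc 0 1) :=
    ((Real.continuous_exp.comp (continuous_const.mul continuous_id)).continuousOn).mul hIc
  have hB' : ∀ t ∈ Ico (0:ℝ) 1, HasDerivWithinAt B (B' t) (Ici t) t := by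
    intro t ht
    have hmem : Icc (0:ℝ) 1 ∈ 𝓝[≥] t := by
      refine mem_nhdsWithin.2 ⟨Iio 1, isOpen_Iio, ht.2, ?_⟩
      rintro x ⟨hx1, hx2⟩
      exact ⟨le_trans ht.1 hx2, le_of_lt hx1⟩
    have hint : IntervalIntegrable η volume 0 t := by
      apply ContinuousOn.intervalIntegrable
      rw [Set.uIcc_of_le ht.1]
      exact hηc.mono (Set.Icc_subset_Icc le_rfl ht.2.le)
    have hmem' : Icc (0:ℝ) 1 ∈ 𝓝[>] t :=
      nhdsWithin_mono t Ioi_subset_Ici_self hmem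
    have hmeas : StronglyMeasurableAtFilter η (𝓝[>] t) volume :=
      ⟨Icc 0 1, hmem', hηc.aestronglyMeasurable measurableSet_Icc⟩
    have hcw : ContinuousWithinAt η (Ioi t) t :=
      (hηc t ⟨ht.1, ht.2.le⟩).mono_of_mem_nhdsWithin hmem'
    have hID : HasDerivWithinAt I (η t) (Ici t) t :=
      intervalIntegral.integral_hasDerivWithinAt_right hint hmeas hcw
    have hexp : HasDerivWithinAt (fun s => Real.exp (L * s)) (L * Real.exp (L * t))
        (Ici t) t := by
      have := ((hasDerivAt_id t).const_mul L).exp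
      simpa [mul_comm] using this.hasDerivWithinAt
    have := hexp.mul hID
    have hcancel : Real.exp (L * t) * η t = ε t + δ := by
      rw [hηdef]
      simp only []
      rw [← mul_assoc, ← Real.exp_add]
      simp
    refine this.congr_deriv ?_
    rw [hB'def, hBdef]
    simp only []
    rw [hcancel]
    ring
  have key : ∀ x ∈ Icc (0:ℝ) 1, ‖f x‖ ≤ B x := by
    apply image_norm_le_of_norm_deriv_right_lt_deriv_boundary' hf hf' _ hBc hB'
    · intro x hx hfx
      calc ‖f' x‖ ≤ L * ‖f x‖ + ε x := hbound x hx
        _ = L * B x + ε x := by rw [hfx]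
        _ < B' x := by rw [hB'def]; simp only []; linarith
    · simp [h0, hBdef, hIdef]
  have h1 := key 1 (by norm_num)
  calc ‖f 1‖ ≤ B 1 := h1
    _ = Real.exp L * ∫ s in (0:ℝ)..1, η s := by rw [hBdef]; simp; rfl
  
/-- Squared Grönwall flow-discrepancy bound: combining the Grönwall estimate
with Cauchy–Schwarz yields the mean-squared-error form used in Proposition 2,
with multiplicative constant `C = e^{2L}`. -/
theorem gronwall_flow_discrepancy_sq {E : Type*} [NormedAddCommGroup E]
    [NormedSpace ℝ E] [CompleteSpace E]
    (x₀ g : E) (L : ℝ) (hL : 0 ≤ L)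
    (v : ℝ → E → E)
    (hlip : ∀ t ∈ Set.Icc (0 : ℝ) 1, LipschitzWith L.toNNReal (v t))
    (hcont : ContinuousOn
      (fun t : ℝ => v t ((1 - t) • x₀ + t • g)) (Set.Icc (0 : ℝ) 1))
    (ψ : ℝ → E) (hψ0 : ψ 0 = x₀)
    (hderiv : ∀ t ∈ Set.Icc (0 : ℝ) 1, HasDerivAt ψ (v t (ψ t)) t) :
    ‖ψ 1 - g‖ ^ 2 ≤ Real.exp (2 * L) *
      ∫ t in (0 : ℝ)..1, ‖v t ((1 - t) • x₀ + t • g) - (g - x₀)‖ ^ 2 := by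
  set φ : ℝ → E := fun t => (1 - t) • x₀ + t • g with hφdef
  set ε : ℝ → ℝ := fun t => ‖v t (φ t) - (g - x₀)‖ with hεdef
  have hεc : ContinuousOn ε (Icc 0 1) := (hcont.sub continuousOn_const).norm
  have hεnn : ∀ t, 0 ≤ ε t := fun t => norm_nonneg _
  have hφd : ∀ t : ℝ, HasDerivAt φ (g - x₀) t := by
    intro t
    have h1 : HasDerivAt (fun s : ℝ => (1 - s) • x₀) ((-1 : ℝ) • x₀) t :=
      ((hasDerivAt_id t).const_sub 1).smul_const x₀
    have h2 : HasDerivAt (fun s : ℝ => s • g) ((1 : ℝ) • g) t :=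
      (hasDerivAt_id t).smul_const g
    have h := h1.add h2
    have hval : ((-1:ℝ)) • x₀ + ((1:ℝ)) • g = g - x₀ := by
      simp [sub_eq_add_neg, add_comm]
    rw [hφdef]
    exact hval ▸ h
  set f : ℝ → E := fun t => ψ t - φ t with hfdef
  have hfd : ∀ t ∈ Icc (0:ℝ) 1, HasDerivAt f (v t (ψ t) - (g - x₀)) t :=
    fun t ht => (hderiv t ht).sub (hφd t)
  have hfc : ContinuousOn f (Icc 0 1) :=
    fun t ht => ((hfd t ht).continuousAt).continuousWithinAt
  have h0 : f 0 = 0 := by simp [hfdef, hψ0, hφdef]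
  have hbound : ∀ t ∈ Ico (0:ℝ) 1, ‖v t (ψ t) - (g - x₀)‖ ≤ L * ‖f t‖ + ε t := by
    intro t ht
    have htI : t ∈ Icc (0:ℝ) 1 := ⟨ht.1, ht.2.le⟩
    have hlipt := (hlip t htI).dist_le_mul (ψ t) (φ t)
    rw [Real.coe_toNNReal L hL] at hlipt
    calc ‖v t (ψ t) - (g - x₀)‖
        ≤ ‖v t (ψ t) - v t (φ t)‖ + ‖v t (φ t) - (g - x₀)‖ := norm_sub_le_norm_sub_add_norm_sub _ _ _
      _ ≤ L * ‖f t‖ + ε t := by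
          apply add_le_add _ le_rfl
          rw [← dist_eq_norm, ← dist_eq_norm] at *
          exact hlipt
  -- Grönwall with δ → 0
  have hεint : IntervalIntegrable ε volume 0 1 := by
    apply ContinuousOn.intervalIntegrable
    rwa [Set.uIcc_of_le zero_le_one]
  have hA : ‖f 1‖ ≤ Real.exp L * ∫ s in (0:ℝ)..1, ε s := by
    refine le_of_forall_pos_le_add ?_
    intro c hc
    set δ : ℝ := c / Real.exp L with hδdef
    have hδ : 0 < δ := div_pos hc (Real.exp_pos L)
    have H := gronwall_var_eps hL hδ hfc
      (fun t ht => (hfd t ⟨ht.1, ht.2.le⟩).hasDerivWithinAt) hεc h0 hbound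
    refine H.trans ?_
    have hmono : (∫ s in (0:ℝ)..1, Real.exp (-(L * s)) * (ε s + δ))
        ≤ ∫ s in (0:ℝ)..1, (ε s + δ) := by
      apply intervalIntegral.integral_mono_on zero_le_one
      · apply ContinuousOn.intervalIntegrable
        rw [Set.uIcc_of_le zero_le_one]
        exact ((Real.continuous_exp.comp
          (continuous_const.mul continuous_id).neg).continuousOn).mul
          (hεc.add continuousOn_const)
      · exact hεint.add (intervalIntegrable_const)
      · intro s hs
        have h1 : Real.exp (-(L * s)) ≤ 1 := by
          rw [Real.exp_le_one_iff]
          simp only [neg_nonpos]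
          exact mul_nonneg hL hs.1
        have h2 : 0 ≤ ε s + δ := add_nonneg (hεnn s) hδ.le
        nlinarith
    have heq : (∫ s in (0:ℝ)..1, (ε s + δ)) = (∫ s in (0:ℝ)..1, ε s) + δ := by
      rw [intervalIntegral.integral_add hεint intervalIntegrable_const]
      simp
    calc Real.exp L * ∫ s in (0:ℝ)..1, Real.exp (-(L * s)) * (ε s + δ)
        ≤ Real.exp L * ((∫ s in (0:ℝ)..1, ε s) + δ) := by
          apply mul_le_mul_of_nonneg_left _ (Real.exp_pos L).le
          rw [← heq]; exact hmono
      _ = Real.exp L * (∫ s in (0:ℝ)..1, ε s) + c := by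
          rw [mul_add, hδdef, mul_div_cancel₀ _ (Real.exp_pos L).ne']
  -- Cauchy–Schwarz
  set μ : Measure ℝ := volume.restrict (Ioc 0 1) with hμdef
  haveI : IsFiniteMeasure μ := by
    constructor
    rw [hμdef, Measure.restrict_apply_univ, Real.volume_Ioc]
    simp
  have hεm : AEStronglyMeasurable ε μ :=
    (hεc.mono Ioc_subset_Icc_self).aestronglyMeasurable measurableSet_Ioc
  obtain ⟨C, hC⟩ := isCompact_Icc.exists_bound_of_continuousOn hεc
  have hεLp : MemLp ε (ENNReal.ofReal 2) μ := by
    apply MemLp.of_bound hεm C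
    rw [hμdef]
    filter_upwards [ae_restrict_mem measurableSet_Ioc] with x hx
    exact hC x (Ioc_subset_Icc_self hx)
  have h1Lp : MemLp (fun _ : ℝ => (1:ℝ)) (ENNReal.ofReal 2) μ := memLp_const 1
  have hpq : Real.HolderConjugate 2 2 := Real.HolderConjugate.two_two
  have hCS := integral_mul_le_Lp_mul_Lq_of_nonneg hpq
    (Filter.Eventually.of_forall (fun x => hεnn x))
    (Filter.Eventually.of_forall (fun _ => zero_le_one)) hεLp h1Lp
  have hμuniv : (∫ _ : ℝ, (1:ℝ) ∂μ) = 1 := by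
    rw [MeasureTheory.integral_const, smul_eq_mul, mul_one, hμdef, measureReal_def, Measure.restrict_apply_univ,
      Real.volume_Ioc]
    simp
  have hone : (∫ a : ℝ, (1:ℝ) ^ (2:ℝ) ∂μ) = 1 := by
    simpa using hμuniv
  rw [hone] at hCS
  simp only [mul_one, Real.one_rpow] at hCS
  set S : ℝ := ∫ a : ℝ, ε a ^ (2:ℝ) ∂μ with hSdef
  have hSnn : 0 ≤ S := integral_nonneg (fun a => Real.rpow_nonneg (hεnn a) 2)
  have hCS' : (∫ a : ℝ, ε a ∂μ) ≤ Real.sqrt S := by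
    rw [Real.sqrt_eq_rpow]
    exact hCS
  have hAint : (∫ s in (0:ℝ)..1, ε s) = ∫ a : ℝ, ε a ∂μ := by
    rw [intervalIntegral.integral_of_le zero_le_one]
  have hAnn : 0 ≤ ∫ s in (0:ℝ)..1, ε s := by
    rw [hAint]; exact integral_nonneg (fun a => hεnn a)
  have hSeq : S = ∫ t in (0:ℝ)..1, ε t ^ 2 := by
    rw [hSdef, intervalIntegral.integral_of_le zero_le_one]
    apply MeasureTheory.integral_congr_ae
    filter_upwards with a
    rw [Real.rpow_two]
  -- combine
  have hψ1 : ψ 1 - g = f 1 := by simp [hfdef, hφdef]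
  have hfinal : ‖f 1‖ ^ 2 ≤ Real.exp (2 * L) * S := by
    have h2 : ‖f 1‖ ≤ Real.exp L * Real.sqrt S := by
      refine hA.trans ?_
      apply mul_le_mul_of_nonneg_left _ (Real.exp_pos L).le
      rw [hAint]; exact hCS'
    have h3 : ‖f 1‖ ^ 2 ≤ (Real.exp L * Real.sqrt S) ^ 2 :=
      pow_le_pow_left₀ (norm_nonneg _) h2 2
    calc ‖f 1‖ ^ 2 ≤ (Real.exp L * Real.sqrt S) ^ 2 := h3
      _ = Real.exp L ^ 2 * Real.sqrt S ^ 2 := by ring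
      _ = Real.exp (2 * L) * S := by
          rw [Real.sq_sqrt hSnn, ← Real.exp_nat_mul]
          norm_num
  rw [hψ1]
  have : (∫ t in (0 : ℝ)..1, ‖v t ((1 - t) • x₀ + t • g) - (g - x₀)‖ ^ 2)
      = ∫ t in (0:ℝ)..1, ε t ^ 2 := rfl
  rw [this, ← hSeq]
  exact hfinal
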